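/- arXiv:1602.08073 — 5 statements merged into one kernel-verified Lean document; each statement's English description precedes it below -/
import Mathlib

section
/- For odd n ≥ 3, the permutations τ_3, τ_5, …, τ_n generate the alternating group A_n. -/
open Equiv Equiv.Perm Subgroup Finset

theorem aux_alt_le {α : Type*} [DecidableEq α] [Fintype α] {σ : Perm α} (h1 : IsCycle σ)
    (h2 : σ.support = Finset.univ) (x : α) :
    alternatingGroup α ≤
      closure ({σ, swap x (σ x) * swap (σ x) (σ (σ x))} : Set (Perm α)) := by
  set s : ℕ → Perm α := fun n => swap ((σ ^ n) x) ((σ ^ (n + 1)) x) with hs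
  set H := closure ({σ, swap x (σ x) * swap (σ x) (σ (σ x))} : Set (Perm α)) with hH
  have h3 : σ ∈ H := subset_closure (Set.mem_insert σ _)
  have ht : s 0 * s 1 ∈ H := by
    have : s 0 * s 1 = swap x (σ x) * swap (σ x) (σ (σ x)) := by
      simp [hs, pow_succ]
    rw [this]
    exact subset_closure (Set.mem_insert_of_mem _ rfl)
  have hsq : ∀ n, s n * s n = 1 := fun n => swap_mul_self _ _
  have step0 : ∀ n : ℕ, s n * s (n + 1) ∈ H := by
    intro n
    induction n with
    | zero => exact ht
    | succ n ih =>
      have key : ∀ m : ℕ, s (m + 1) = σ * s m * σ⁻¹ := by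
        intro m
        simp only [hs]
        rw [← swap_apply_apply]
        congr 1 <;> simp [pow_succ', Equiv.Perm.mul_apply]
      have : s (n + 1) * s (n + 2) = σ * (s n * s (n + 1)) * σ⁻¹ := by
        rw [key (n + 1), key n]
        simp only [mul_assoc, inv_mul_cancel_left]
      rw [this]
      exact H.mul_mem (H.mul_mem h3 ih) (H.inv_mem h3)
  have step1 : ∀ n : ℕ, s 0 * s n ∈ H := by
    intro n
    induction n with
    | zero => rw [hsq 0]; exact H.one_mem
    | succ n ih =>
      have : s 0 * s (n + 1) = (s 0 * s n) * (s n * s (n + 1)) := by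
        rw [mul_assoc, ← mul_assoc (s n), hsq n, one_mul]
      rw [this]
      exact H.mul_mem ih (step0 n)
  have step2 : ∀ n : ℕ, x ≠ (σ ^ n) x → s 0 * swap x ((σ ^ n) x) ∈ H := by
    intro n
    induction n with
    | zero => intro h; simp at h
    | succ n ih =>
      intro h
      by_cases h5 : x = (σ ^ n) x
      · have : swap x ((σ ^ (n + 1)) x) = s n := by
          show swap x ((σ ^ (n + 1)) x) = swap ((σ ^ n) x) ((σ ^ (n + 1)) x)
          rw [← h5]
        rw [this]
        exact step1 n
      · have key : swap x ((σ ^ (n + 1)) x) = s n * swap x ((σ ^ n) x) * s n := by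
          rw [hs]
          rw [swap_mul_swap_mul_swap h5 h, swap_comm]
        have ihH := ih h5
        have ihH' : swap x ((σ ^ n) x) * s 0 ∈ H := by
          have := H.inv_mem ihH
          rwa [mul_inv_rev, swap_inv, swap_inv] at this
        have expand : s 0 * swap x ((σ ^ (n + 1)) x) =
            (s 0 * s n) * (swap x ((σ ^ n) x) * s 0) * (s 0 * s n) := by
          rw [key]
          simp only [mul_assoc, swap_mul_self_mul, hs]
        rw [expand]
        exact H.mul_mem (H.mul_mem (step1 n) ihH') (step1 n)
  have step3 : ∀ y : α, y ≠ x → s 0 * swap x y ∈ H := by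
    intro y hy
    have hx' : σ x ≠ x := by
      rw [← Equiv.Perm.mem_support, h2]; exact Finset.mem_univ x
    have hy' : σ y ≠ y := by
      rw [← Equiv.Perm.mem_support, h2]; exact Finset.mem_univ y
    obtain ⟨m, hm⟩ := h1.exists_pow_eq hx' hy'
    rw [← hm]
    exact step2 m (by rw [hm]; exact hy.symm)
  have step3' : ∀ y : α, y ≠ x → swap x y * s 0 ∈ H := by
    intro y hy
    have := H.inv_mem (step3 y hy)
    rwa [mul_inv_rev, swap_inv, swap_inv] at this
  have step4 : ∀ a b : α, a ≠ b → swap a b * s 0 ∈ H := by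
    intro a b hab
    by_cases hax : a = x
    · subst hax
      exact step3' b (Ne.symm hab)
    by_cases hbx : b = x
    · subst hbx
      rw [swap_comm]
      exact step3' a hax
    · have key : swap a b = swap x b * swap x a * swap x b := by
        rw [swap_comm x a, swap_mul_swap_mul_swap hax hab, swap_comm]
      have expand : swap a b * s 0 =
          (swap x b * s 0) * (s 0 * swap x a) * (swap x b * s 0) := by
        rw [key]
        simp only [mul_assoc, swap_mul_self_mul, hs]
      rw [expand]
      exact H.mul_mem (H.mul_mem (step3' b hbx) (step3 a hax)) (step3' b hbx)
  -- now conclude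
  intro g hg
  suffices hind : ∀ (m : ℕ) (l : List (Perm α)), (∀ τ ∈ l, IsSwap τ) →
      l.length = 2 * m → l.prod ∈ H by
    obtain ⟨l, hl, hl2⟩ := truncSwapFactors g
    obtain ⟨m, hm⟩ := (prod_list_swap_mem_alternatingGroup_iff_even_length hl2).1 (hl ▸ hg)
    rw [← two_mul] at hm
    rw [← hl]
    exact hind m l hl2 hm
  intro m
  induction m with
  | zero =>
    intro l _ hlen
    simp only [Nat.mul_zero, List.length_eq_zero_iff] at hlen
    rw [hlen]; simpa using H.one_mem
  | succ m ih =>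
    intro l hl hlen
    rw [Nat.mul_succ] at hlen
    obtain ⟨a, l, rfl⟩ := l.exists_of_length_succ hlen
    rw [List.length_cons, Nat.succ_inj] at hlen
    obtain ⟨b, l, rfl⟩ := l.exists_of_length_succ hlen
    rw [List.length_cons, Nat.succ_inj] at hlen
    rw [List.prod_cons, List.prod_cons, ← mul_assoc]
    have hab : a * b ∈ H := by
      obtain ⟨a1, a2, ha12, ha⟩ := hl a (List.mem_cons_self (a := a))
      obtain ⟨b1, b2, hb12, hb⟩ := hl b (List.mem_cons_of_mem a (List.mem_cons_self (a := b) (l := l)))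
      rw [ha, hb]
      have h1' : swap a1 a2 * s 0 ∈ H := step4 a1 a2 ha12
      have h2' : s 0 * swap b1 b2 ∈ H := by
        have := H.inv_mem (step4 b1 b2 hb12)
        rwa [mul_inv_rev, swap_inv, swap_inv] at this
      have : swap a1 a2 * swap b1 b2 = (swap a1 a2 * s 0) * (s 0 * swap b1 b2) := by
        simp only [mul_assoc, swap_mul_self_mul, hs]
      rw [this]
      exact H.mul_mem h1' h2'
    exact H.mul_mem hab (ih l (fun τ hτ => hl τ (by simp [hτ])) hlen)

/-- `tau n k` is the permutation of positions `{1,…,n}` (0-indexed as `Fin n`) with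
`τ_k(1)=k`, `τ_k(i)=i-1` for `2 ≤ i ≤ k`, and `τ_k(i)=i` for `i > k`. -/
def tau (n k : ℕ) : Equiv.Perm (Fin n) :=
  if h : k - 1 < n then (Fin.cycleRange ⟨k - 1, h⟩)⁻¹ else 1

/-- For odd `n ≥ 3`, the permutations `τ_3, τ_5, …, τ_n` generate the alternating group. -/
theorem closure_tau_eq_alternating (n : ℕ) (hodd : Odd n) (h3 : 3 ≤ n) :
    Subgroup.closure {σ : Equiv.Perm (Fin n) | ∃ k, Odd k ∧ 3 ≤ k ∧ k ≤ n ∧ σ = tau n k} =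
      alternatingGroup (Fin n) := by
  obtain ⟨m, rfl⟩ : ∃ m, n = m + 3 := ⟨n - 3, by omega⟩
  apply le_antisymm
  · rw [Subgroup.closure_le]
    rintro σ ⟨k, hk1, hk3, hkn, rfl⟩
    have hlt : k - 1 < m + 3 := by omega
    simp only [tau, dif_pos hlt]
    rw [SetLike.mem_coe, mem_alternatingGroup, map_inv, Fin.sign_cycleRange]
    have : Even (k - 1) := by
      obtain ⟨j, hj⟩ := hk1
      exact ⟨j, by omega⟩
    simp [this.neg_one_pow]
  · have h1 : IsCycle (finRotate (m + 3)) := isCycle_finRotate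
    have h2 : (finRotate (m + 3)).support = Finset.univ := support_finRotate
    refine le_trans (aux_alt_le h1 h2 0) ?_
    rw [Subgroup.closure_le]
    have hv0 : ((0 : Fin (m + 3)) : ℕ) = 0 := by simp
    have hv1 : ((1 : Fin (m + 3)) : ℕ) = 1 := by simp
    have hv2 : ((2 : Fin (m + 3)) : ℕ) = 2 := by simp
    have hne : (1 : Fin (m + 3)) ≠ Fin.last (m + 2) := by
      intro h
      have := congrArg Fin.val h
      rw [hv1, Fin.val_last] at this
      omega
    have hone : (finRotate (m + 3)) 0 = 1 := by simp
    have htwo : (finRotate (m + 3)) 1 = 2 := by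
      apply Fin.ext
      rw [coe_finRotate_of_ne_last hne, hv1, hv2]
    have hadd : (1 : Fin (m + 3)) + 1 = 2 := (finRotate_succ_apply 1).symm.trans htwo
    have h01 : (0 : Fin (m + 3)) ≠ 1 := by simp [Fin.ext_iff, hv0, hv1]
    have h02 : (0 : Fin (m + 3)) ≠ 2 := by rw [Ne, Fin.ext_iff, hv0, hv2]; omega
    have h12 : (1 : Fin (m + 3)) ≠ 2 := by
      intro h
      have := congrArg Fin.val h
      rw [hv1, hv2] at this
      omega
    have hτn : tau (m + 3) (m + 3) = (finRotate (m + 3))⁻¹ := by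
      have hlt : m + 3 - 1 < m + 3 := by omega
      simp only [tau, dif_pos hlt]
      congr 1
      have : (⟨m + 3 - 1, hlt⟩ : Fin (m + 3)) = Fin.last (m + 2) := rfl
      rw [this, Fin.cycleRange_last]
    have hlt2 : (3 : ℕ) - 1 < m + 3 := by omega
    have hτ3 : tau (m + 3) 3 = (swap (0 : Fin (m + 3)) 1 * swap 1 2)⁻¹ := by
      simp only [tau, dif_pos hlt2]
      congr 1
      have h20 : (⟨3 - 1, hlt2⟩ : Fin (m + 3)) = (2 : Fin (m + 3)) := by
        rw [Fin.ext_iff, hv2]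
      apply Equiv.ext
      intro j
      rw [h20, Equiv.Perm.mul_apply]
      rcases lt_trichotomy j 2 with hlt | heq | hgt
      · have : j = 0 ∨ j = 1 := by
          rw [Fin.lt_def, hv2] at hlt
          have : (j : ℕ) = 0 ∨ (j : ℕ) = 1 := by omega
          rcases this with h | h
          · exact Or.inl (Fin.ext (by rw [h, hv0]))
          · exact Or.inr (Fin.ext (by rw [h, hv1]))
        rw [Fin.cycleRange_of_lt hlt]
        rcases this with rfl | rfl
        · rw [swap_apply_of_ne_of_ne h01 h02, swap_apply_left, zero_add]
        · rw [swap_apply_left, swap_apply_of_ne_of_ne (Ne.symm h02) (Ne.symm h12), hadd]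
      · rw [heq, Fin.cycleRange_self, swap_apply_right,
          swap_apply_right]
      · rw [Fin.cycleRange_of_gt hgt]
        have hj1 : j ≠ 1 := by
          intro h; rw [h] at hgt
          rw [Fin.lt_def, hv1, hv2] at hgt; omega
        have hj2 : j ≠ 2 := hgt.ne'
        have hj0 : j ≠ 0 := by
          intro h; rw [h] at hgt
          rw [Fin.lt_def, hv0, hv2] at hgt; omega
        rw [swap_apply_of_ne_of_ne hj1 hj2, swap_apply_of_ne_of_ne hj0 hj1]
    rintro g (rfl | rfl)
    · have : finRotate (m + 3) = (tau (m + 3) (m + 3))⁻¹ := by rw [hτn, inv_inv]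
      rw [this]
      exact inv_mem (subset_closure ⟨m + 3, hodd, by omega, le_rfl, rfl⟩)
    · have heq : swap (0 : Fin (m + 3)) (finRotate (m + 3) 0) *
          swap (finRotate (m + 3) 0) (finRotate (m + 3) (finRotate (m + 3) 0)) =
          (tau (m + 3) 3)⁻¹ := by
        rw [hone, htwo, hτ3, inv_inv]
      rw [heq]
      exact inv_mem (subset_closure ⟨3, by decide, le_rfl, by omega, rfl⟩)
end

section
/- For every n ≥ 3 there exists an acyclic hypergraph with vertex set the set [n]^(2) of ordered pairs of distinct elements of {1,…,n}, whose hyperedges are all triangles T(a,b,c) = {(a,b),(b,c),(c,a)} for suitable triples (a,b,c) of distinct elements, and which has exactly two connected components: one whose vertex set is exactly {(3,2),(2,1),(1,3)}, and one containing all other vertices. -/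
/-- `PairsSet n` is `[n]^(2)`, the set of ordered pairs of distinct elements of `{1,…,n}`. -/
def PairsSet (n : ℕ) : Set (ℕ × ℕ) :=
  {p | p.1 ≠ p.2 ∧ 1 ≤ p.1 ∧ p.1 ≤ n ∧ 1 ≤ p.2 ∧ p.2 ≤ n}

/-- The triangle `T(a,b,c) = {(a,b),(b,c),(c,a)}`. -/
def Tset (a b c : ℕ) : Set (ℕ × ℕ) := {(a, b), (b, c), (c, a)}

/-- `h` is a triangle `T(a,b,c)` for some triple of distinct elements of `{1,…,n}`. -/
def IsTriangle (n : ℕ) (h : Set (ℕ × ℕ)) : Prop :=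
  ∃ a b c : ℕ, a ≠ b ∧ b ≠ c ∧ a ≠ c ∧ 1 ≤ a ∧ a ≤ n ∧ 1 ≤ b ∧ b ≤ n ∧ 1 ≤ c ∧ c ≤ n ∧
    h = Tset a b c

/-- The bipartite incidence graph of a hypergraph with vertex set `V` and hyperedge set `H`:
vertices on one side, hyperedges on the other, adjacency given by membership. -/
def incGraph (V : Set (ℕ × ℕ)) (H : Set (Set (ℕ × ℕ))) : SimpleGraph (↥V ⊕ ↥H) where
  Adj x y :=
    (∃ v h, x = Sum.inl v ∧ y = Sum.inr h ∧ (v : ℕ × ℕ) ∈ (h : Set (ℕ × ℕ))) ∨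
    (∃ v h, y = Sum.inl v ∧ x = Sum.inr h ∧ (v : ℕ × ℕ) ∈ (h : Set (ℕ × ℕ)))
  symm := by
    constructor
    rintro x y (⟨v, h, rfl, rfl, hm⟩ | ⟨v, h, rfl, rfl, hm⟩)
    · exact Or.inr ⟨v, h, rfl, rfl, hm⟩
    · exact Or.inl ⟨v, h, rfl, rfl, hm⟩
  loopless := by constructor; rintro x (⟨v, h, rfl, hy, -⟩ | ⟨v, h, hy, rfl, -⟩) <;> simp at hy

/-- The hypergraph `(V, H)` is acyclic and has exactly two connected components, one whose
set of (pair-)vertices is exactly the three vertices of `T(3,2,1)` and one containing all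
other vertices. -/
def TwoComponents321 (V : Set (ℕ × ℕ)) (H : Set (Set (ℕ × ℕ))) : Prop :=
  ∃ c₁ c₂ : (incGraph V H).ConnectedComponent, c₁ ≠ c₂ ∧
    (∀ x, (incGraph V H).connectedComponentMk x = c₁ ∨
          (incGraph V H).connectedComponentMk x = c₂) ∧
    (∀ v : ↥V, (incGraph V H).connectedComponentMk (Sum.inl v) = c₁ ↔
      (v : ℕ × ℕ) ∈ Tset 3 2 1)

open SimpleGraph

section Generic
variable {V : Type*} (G : SimpleGraph V)

lemma acyclic_of_level (f : V → ℕ)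
    (h1 : ∀ x y, G.Adj x y → f x ≠ f y)
    (h2 : ∀ x y z, G.Adj x y → G.Adj x z → f y < f x → f z < f x → y = z) :
    G.IsAcyclic := by
  intro u0 c0 hc0
  classical
  have hne : List.argmax f c0.support ≠ none :=
    fun h => c0.support_ne_nil (List.argmax_eq_none.mp h)
  obtain ⟨u, hu'⟩ := Option.ne_none_iff_exists'.mp hne
  have hu : u ∈ List.argmax f c0.support := Option.mem_def.mpr hu'
  have humem : u ∈ c0.support := List.argmax_mem hu
  have hmax : ∀ a, a ∈ (c0.rotate u humem).support → f a ≤ f u := by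
    intro a ha
    rcases (SimpleGraph.Walk.mem_support_iff _).mp ha with rfl | ha
    · exact le_refl _
    · have : a ∈ c0.support.tail :=
        (SimpleGraph.Walk.support_rotate c0 u humem).mem_iff.mp ha
      exact List.le_of_mem_argmax (List.mem_of_mem_tail this) hu
  have hc : (c0.rotate u humem).IsCycle := hc0.rotate humem
  revert hc hmax
  generalize c0.rotate u humem = c
  intro hmax hc
  rcases c with _ | @⟨_, b, _, hadj, p⟩
  · exact hc.ne_nil rfl
  · rcases hq : p.reverse with _ | @⟨_, w, _, hadj2, q⟩
    · exact hadj.ne rfl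
    · have hbmem : b ∈ (SimpleGraph.Walk.cons hadj p).support := by
        simp [SimpleGraph.Walk.support_cons, SimpleGraph.Walk.start_mem_support]
      have hwmem : w ∈ (SimpleGraph.Walk.cons hadj p).support := by
        have : w ∈ p.reverse.support := by
          rw [hq]; simp [SimpleGraph.Walk.support_cons]
        rw [SimpleGraph.Walk.support_reverse, List.mem_reverse] at this
        simp [SimpleGraph.Walk.support_cons, this]
      have hbw : b ≠ w := by
        intro hbwe
        have htrail := hc.isTrail
        have hnd := htrail.edges_nodup
        rw [SimpleGraph.Walk.edges_cons] at hnd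
        have hmem : s(u, w) ∈ p.edges := by
          have : s(u, w) ∈ p.reverse.edges := by
            rw [hq]; simp [SimpleGraph.Walk.edges_cons]
          rwa [SimpleGraph.Walk.edges_reverse, List.mem_reverse] at this
        subst hbwe
        exact (List.nodup_cons.mp hnd).1 hmem
      have hfb : f b < f u :=
        lt_of_le_of_ne (hmax b hbmem) (fun h => h1 u b hadj h.symm)
      have hfw : f w < f u :=
        lt_of_le_of_ne (hmax w hwmem) (fun h => h1 u w hadj2 h.symm)
      exact hbw (h2 u b w hadj hadj2 hfb hfw)

lemma closed_comp (S : Set V) (hS : ∀ x ∈ S, ∀ y, G.Adj x y → y ∈ S)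
    {x y : V} (hx : x ∈ S) (hr : G.Reachable x y) : y ∈ S := by
  rcases hr with ⟨wlk⟩
  induction wlk with
  | nil => exact hx
  | cons h p ih => exact ih (hS _ hx _ h)

lemma comp_cover (f : V → ℕ) (r1 r2 : V)
    (h : ∀ x, x ≠ r1 → x ≠ r2 → ∃ y, G.Adj x y ∧ f y < f x) :
    ∀ x, G.connectedComponentMk x = G.connectedComponentMk r1 ∨
         G.connectedComponentMk x = G.connectedComponentMk r2 := by
  have key : ∀ N x, f x < N → G.connectedComponentMk x = G.connectedComponentMk r1 ∨
      G.connectedComponentMk x = G.connectedComponentMk r2 := by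
    intro N
    induction N with
    | zero => intro x hx; omega
    | succ N ih =>
      intro x hx
      by_cases h1 : x = r1
      · exact Or.inl (by rw [h1])
      by_cases h2 : x = r2
      · exact Or.inr (by rw [h2])
      obtain ⟨y, hadj, hlt⟩ := h x h1 h2
      have heq : G.connectedComponentMk x = G.connectedComponentMk y :=
        SimpleGraph.ConnectedComponent.sound hadj.reachable
      rcases ih y (by omega) with hy | hy
      · exact Or.inl (heq.trans hy)
      · exact Or.inr (heq.trans hy)
  exact fun x => key (f x + 1) x (Nat.lt_succ_self _)

end Generic

/-- The concrete triangle system. -/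
def Hset (n : ℕ) : Set (Set (ℕ × ℕ)) :=
  {h | h = Tset 3 2 1 ∨ h = Tset 1 2 3 ∨
    (∃ m j, 4 ≤ m ∧ m ≤ n ∧ 1 ≤ j ∧ j + 2 ≤ m ∧ h = Tset m j (j+1)) ∨
    (∃ m, 3 ≤ m ∧ m + 1 ≤ n ∧ h = Tset (m+1) m 1)}

def Sp (v : ℕ × ℕ) : Prop := v = (3,2) ∨ v = (2,1) ∨ v = (1,3)

open Classical in
noncomputable def fV (v : ℕ × ℕ) : ℕ := if Sp v then 1 else 2 * max v.1 v.2

open Classical in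
noncomputable def fH (h : Set (ℕ × ℕ)) : ℕ :=
  if h = Tset 3 2 1 then 0 else 2 * sSup ((fun p => max p.1 p.2) '' h) - 1

open Classical in
noncomputable def parentTri (v : ℕ × ℕ) : Set (ℕ × ℕ) :=
  if Sp v then Tset 3 2 1
  else if v.1 ≤ 3 ∧ v.2 ≤ 3 then Tset 1 2 3
  else if v.1 < v.2 then
    (if v.1 = 1 then Tset v.2 (v.2-1) 1 else Tset v.2 (v.1-1) v.1)
  else
    (if v.2 = v.1 - 1 then Tset v.1 (v.1-1) 1 else Tset v.1 v.2 (v.2+1))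

lemma mem_Tset {v : ℕ × ℕ} {a b c : ℕ} :
    v ∈ Tset a b c ↔ v = (a,b) ∨ v = (b,c) ∨ v = (c,a) := by
  simp [Tset]

lemma sp_iff {v : ℕ × ℕ} : Sp v ↔ v ∈ Tset 3 2 1 := by
  simp [Sp, mem_Tset]

lemma sp_le {v : ℕ × ℕ} (h : Sp v) : v.1 ≤ 3 ∧ v.2 ≤ 3 := by
  rcases h with rfl | rfl | rfl <;> simp

lemma sSup_triple {x y z M : ℕ} (hx : x ≤ M) (hy : y ≤ M) (hz : z ≤ M)
    (hM : M = x ∨ M = y ∨ M = z) : sSup ({x, y, z} : Set ℕ) = M := by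
  apply le_antisymm
  · exact csSup_le ⟨x, by simp⟩ (by rintro w (rfl | rfl | rfl) <;> assumption)
  · apply le_csSup (Set.Finite.bddAbove (by
      apply Set.Finite.insert; apply Set.Finite.insert; exact Set.finite_singleton _))
    rcases hM with rfl | rfl | rfl <;> simp

lemma image_Tset (a b c : ℕ) :
    (fun p : ℕ × ℕ => max p.1 p.2) '' Tset a b c = {max a b, max b c, max c a} := by
  simp [Tset, Set.image_insert_eq]

lemma T_ne_321 {a b c : ℕ} (ha : 4 ≤ a) : Tset a b c ≠ Tset 3 2 1 := by
  intro he
  have : (a, b) ∈ Tset 3 2 1 := he ▸ (mem_Tset.mpr (Or.inl rfl))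
  rcases mem_Tset.mp this with h | h | h <;>
    (first | (have := congrArg Prod.fst h; simp at this; omega))

lemma fH_321 : fH (Tset 3 2 1) = 0 := by simp [fH]

lemma fH_123 : fH (Tset 1 2 3) = 5 := by
  have hne : Tset 1 2 3 ≠ Tset 3 2 1 := by
    intro he
    have : (1, 2) ∈ Tset 3 2 1 := he ▸ (mem_Tset.mpr (Or.inl rfl))
    rcases mem_Tset.mp this with h | h | h <;> simp_all
  rw [fH, if_neg hne, image_Tset]
  rw [sSup_triple (M := 3) (by simp) (by simp) (by simp) (by simp)]

lemma fH_fam1 {m j : ℕ} (hm : 4 ≤ m) (hj : 1 ≤ j) (hjm : j + 2 ≤ m) :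
    fH (Tset m j (j+1)) = 2 * m - 1 := by
  rw [fH, if_neg (T_ne_321 hm), image_Tset]
  rw [sSup_triple (M := m) (by omega) (by omega) (by omega) (by omega)]

lemma fH_fam2 {m : ℕ} (hm : 3 ≤ m) : fH (Tset (m+1) m 1) = 2 * m + 1 := by
  rw [fH, if_neg (T_ne_321 (by omega)), image_Tset]
  rw [sSup_triple (M := m+1) (by omega) (by omega) (by omega) (by omega)]
  omega

lemma fV_sp {v : ℕ × ℕ} (h : Sp v) : fV v = 1 := by rw [fV, if_pos h]

lemma fV_not_sp {v : ℕ × ℕ} (h : ¬ Sp v) : fV v = 2 * max v.1 v.2 := by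
  rw [fV, if_neg h]

lemma fV_pair (a b : ℕ) : fV (a, b) = 1 ∨ fV (a, b) = 2 * max a b := by
  by_cases h : Sp (a,b)
  · exact Or.inl (fV_sp h)
  · exact Or.inr (fV_not_sp h)

lemma not_sp_of_fst {a b : ℕ} (h : 4 ≤ a) : ¬ Sp (a, b) :=
  fun hs => by have := sp_le hs; simp at this; omega

lemma not_sp_of_snd {a b : ℕ} (h : 4 ≤ b) : ¬ Sp (a, b) :=
  fun hs => by have := sp_le hs; simp at this; omega

lemma sp_iff' {a b : ℕ} : Sp (a,b) ↔ (a = 3 ∧ b = 2) ∨ (a = 2 ∧ b = 1) ∨ (a = 1 ∧ b = 3) := by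
  simp [Sp, Prod.ext_iff]

lemma fne {n : ℕ} {h : Set (ℕ × ℕ)} {v : ℕ × ℕ} (hh : h ∈ Hset n) (hv : v ∈ h) :
    fV v ≠ fH h := by
  rcases hh with rfl | rfl | ⟨m, j, hm, hmn, hj, hjm, rfl⟩ | ⟨m, hm, hmn, rfl⟩
  · rw [fH_321, fV_sp (sp_iff.mpr hv)]; omega
  · rw [fH_123]
    rcases mem_Tset.mp hv with rfl | rfl | rfl
    · rw [fV_not_sp (by rw [sp_iff']; omega)]; simp
    · rw [fV_not_sp (by rw [sp_iff']; omega)]; simp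
    · rw [fV_not_sp (by rw [sp_iff']; omega)]; simp
  · rw [fH_fam1 hm hj hjm]
    rcases mem_Tset.mp hv with rfl | rfl | rfl
    · rw [fV_not_sp (not_sp_of_fst (by omega)), max_eq_left (by omega)]; omega
    · rcases fV_pair j (j+1) with he | he <;> rw [he]
      · omega
      · rw [max_eq_right (by omega)]; omega
    · rw [fV_not_sp (not_sp_of_snd (by omega)), max_eq_right (by omega)]; omega
  · rw [fH_fam2 hm]
    rcases mem_Tset.mp hv with rfl | rfl | rfl
    · rw [fV_not_sp (not_sp_of_fst (by omega)), max_eq_left (by omega)]; omega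
    · rw [fV_not_sp (by rw [sp_iff']; omega), max_eq_left (by omega)]; omega
    · rw [fV_not_sp (not_sp_of_snd (by omega)), max_eq_right (by omega)]; omega

/-- the unique "old arc" of a non-special triangle -/
lemma oldArc {n : ℕ} {h : Set (ℕ × ℕ)} (hn : 3 ≤ n) (hh : h ∈ Hset n)
    (hne : h ≠ Tset 3 2 1) :
    ∃ w, w ∈ h ∧ w ∈ PairsSet n ∧ fV w < fH h ∧
      ∀ v ∈ h, fV v < fH h → v = w := by
  rcases hh with rfl | rfl | ⟨m, j, hm, hmn, hj, hjm, rfl⟩ | ⟨m, hm, hmn, rfl⟩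
  · exact absurd rfl hne
  · refine ⟨(1,2), mem_Tset.mpr (Or.inl rfl), ⟨by simp, by simp, by omega, by simp, by omega⟩,
      ?_, ?_⟩
    · rw [fH_123, fV_not_sp (by rw [sp_iff']; omega)]; simp
    · intro v hv hlt
      rw [fH_123] at hlt
      rcases mem_Tset.mp hv with rfl | rfl | rfl
      · rfl
      · rw [fV_not_sp (by rw [sp_iff']; omega)] at hlt; simp at hlt
      · rw [fV_not_sp (by rw [sp_iff']; omega)] at hlt; simp at hlt
  · refine ⟨(j, j+1), mem_Tset.mpr (Or.inr (Or.inl rfl)),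
      ⟨by simp, by simpa using hj, by omega, by omega, by omega⟩, ?_, ?_⟩
    · rw [fH_fam1 hm hj hjm]
      rcases fV_pair j (j+1) with he | he <;> rw [he]
      · omega
      · rw [max_eq_right (by omega)]; omega
    · intro v hv hlt
      rw [fH_fam1 hm hj hjm] at hlt
      rcases mem_Tset.mp hv with rfl | rfl | rfl
      · rw [fV_not_sp (not_sp_of_fst (by omega)), max_eq_left (by omega)] at hlt; omega
      · rfl
      · rw [fV_not_sp (not_sp_of_snd (by omega)), max_eq_right (by omega)] at hlt; omega
  · refine ⟨(m, 1), mem_Tset.mpr (Or.inr (Or.inl rfl)),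
      ⟨by simp; omega, by omega, by omega, by omega, by omega⟩, ?_, ?_⟩
    · rw [fH_fam2 hm, fV_not_sp (by rw [sp_iff']; omega), max_eq_left (by omega)]; omega
    · intro v hv hlt
      rw [fH_fam2 hm] at hlt
      rcases mem_Tset.mp hv with rfl | rfl | rfl
      · rw [fV_not_sp (not_sp_of_fst (by omega)), max_eq_left (by omega)] at hlt; omega
      · rfl
      · rw [fV_not_sp (not_sp_of_snd (by omega)), max_eq_right (by omega)] at hlt; omega

lemma pt_sp {v : ℕ × ℕ} (h : Sp v) : parentTri v = Tset 3 2 1 := by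
  rw [parentTri, if_pos h]

lemma pt_small {a b : ℕ} (hsp : ¬ Sp (a,b)) (ha : a ≤ 3) (hb : b ≤ 3) :
    parentTri (a,b) = Tset 1 2 3 := by
  rw [parentTri, if_neg hsp, if_pos ⟨ha, hb⟩]

lemma pt_fam1a {m j : ℕ} (hm : 4 ≤ m) (hj : 1 ≤ j) (hjm : j + 2 ≤ m) :
    parentTri (m, j) = Tset m j (j+1) := by
  rw [parentTri, if_neg (not_sp_of_fst (by omega)), if_neg (by simp; omega),
    if_neg (by simp; omega), if_neg (by simp; omega)]

lemma pt_fam1b {m j : ℕ} (hm : 4 ≤ m) (hj : 1 ≤ j) (hjm : j + 2 ≤ m) :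
    parentTri (j+1, m) = Tset m j (j+1) := by
  rw [parentTri, if_neg (not_sp_of_snd (by omega)), if_neg (by simp; omega),
    if_pos (by show j + 1 < m; omega), if_neg (by show ¬ (j + 1 = 1); omega)]
  simp

lemma pt_fam2a {m : ℕ} (hm : 3 ≤ m) : parentTri (m+1, m) = Tset (m+1) m 1 := by
  rw [parentTri, if_neg (not_sp_of_fst (by omega)), if_neg (by simp; omega),
    if_neg (by simp), if_pos (by simp)]
  simp

lemma pt_fam2b {m : ℕ} (hm : 3 ≤ m) : parentTri (1, m+1) = Tset (m+1) m 1 := by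
  rw [parentTri, if_neg (not_sp_of_snd (by omega)), if_neg (by simp; omega),
    if_pos (by simp; omega), if_pos (by simp)]
  simp

lemma parent_eq {n : ℕ} {h : Set (ℕ × ℕ)} {v : ℕ × ℕ} (hh : h ∈ Hset n) (hv : v ∈ h)
    (hlt : fH h < fV v) : h = parentTri v := by
  rcases hh with rfl | rfl | ⟨m, j, hm, hmn, hj, hjm, rfl⟩ | ⟨m, hm, hmn, rfl⟩
  · exact (pt_sp (sp_iff.mpr hv)).symm
  · rw [fH_123] at hlt
    rcases mem_Tset.mp hv with rfl | rfl | rfl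
    · rw [fV_not_sp (by rw [sp_iff']; omega)] at hlt; simp at hlt
    · exact (pt_small (by rw [sp_iff']; omega) (by omega) (by omega)).symm
    · exact (pt_small (by rw [sp_iff']; omega) (by omega) (by omega)).symm
  · rw [fH_fam1 hm hj hjm] at hlt
    rcases mem_Tset.mp hv with rfl | rfl | rfl
    · exact (pt_fam1a hm hj hjm).symm
    · exfalso
      rcases fV_pair j (j+1) with he | he <;> rw [he] at hlt
      · omega
      · rw [max_eq_right (by omega)] at hlt; omega
    · exact (pt_fam1b hm hj hjm).symm
  · rw [fH_fam2 hm] at hlt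
    rcases mem_Tset.mp hv with rfl | rfl | rfl
    · exact (pt_fam2a hm).symm
    · exfalso
      rw [fV_not_sp (by rw [sp_iff']; omega), max_eq_left (by omega)] at hlt; omega
    · exact (pt_fam2b hm).symm

lemma only_321 {n : ℕ} {h : Set (ℕ × ℕ)} {v : ℕ × ℕ} (hh : h ∈ Hset n) (hv : v ∈ h)
    (hsp : Sp v) : h = Tset 3 2 1 := by
  rcases hh with rfl | rfl | ⟨m, j, hm, hmn, hj, hjm, rfl⟩ | ⟨m, hm, hmn, rfl⟩
  · rfl
  · exfalso; rcases mem_Tset.mp hv with rfl | rfl | rfl <;> (rw [sp_iff'] at hsp; omega)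
  · exfalso; rcases mem_Tset.mp hv with rfl | rfl | rfl <;> (rw [sp_iff'] at hsp; omega)
  · exfalso; rcases mem_Tset.mp hv with rfl | rfl | rfl <;> (rw [sp_iff'] at hsp; omega)

/-- existence of the parent triangle of any non-special, non-root vertex. -/
lemma parent_exists {n : ℕ} {v : ℕ × ℕ} (hv : v ∈ PairsSet n) (hsp : ¬ Sp v)
    (hne : v ≠ (1,2)) :
    parentTri v ∈ Hset n ∧ v ∈ parentTri v ∧ fH (parentTri v) < fV v := by
  obtain ⟨a, b⟩ := v
  obtain ⟨hab, ha1, han, hb1, hbn⟩ := hv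
  simp only at hab ha1 han hb1 hbn
  rw [sp_iff'] at hsp
  have hne' : ¬ (a = 1 ∧ b = 2) := by
    intro ⟨h1, h2⟩; exact hne (by rw [h1, h2])
  by_cases hsm : a ≤ 3 ∧ b ≤ 3
  · have hcase : (a = 2 ∧ b = 3) ∨ (a = 3 ∧ b = 1) := by omega
    rcases hcase with ⟨rfl, rfl⟩ | ⟨rfl, rfl⟩
    · rw [pt_small (by rw [sp_iff']; omega) (by omega) (by omega)]
      refine ⟨Or.inr (Or.inl rfl), mem_Tset.mpr (Or.inr (Or.inl rfl)), ?_⟩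
      rw [fH_123, fV_not_sp (by rw [sp_iff']; omega)]; simp
    · rw [pt_small (by rw [sp_iff']; omega) (by omega) (by omega)]
      refine ⟨Or.inr (Or.inl rfl), mem_Tset.mpr (Or.inr (Or.inr rfl)), ?_⟩
      rw [fH_123, fV_not_sp (by rw [sp_iff']; omega)]; simp
  · by_cases hab' : a < b
    · have hb4 : 4 ≤ b := by omega
      by_cases ha' : a = 1
      · subst ha'
        obtain ⟨m, rfl⟩ : ∃ m, b = m + 1 := ⟨b - 1, by omega⟩
        rw [pt_fam2b (by omega)]
        refine ⟨Or.inr (Or.inr (Or.inr ⟨m, by omega, by omega, rfl⟩)), ?_, ?_⟩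
        · exact mem_Tset.mpr (Or.inr (Or.inr rfl))
        · rw [fH_fam2 (by omega), fV_not_sp (by rw [sp_iff']; omega),
            max_eq_right (by omega)]
          omega
      · obtain ⟨j, rfl⟩ : ∃ j, a = j + 1 := ⟨a - 1, by omega⟩
        rw [pt_fam1b (m := b) (j := j) (by omega) (by omega) (by omega)]
        refine ⟨Or.inr (Or.inr (Or.inl ⟨b, j, by omega, by omega, by omega, by omega, rfl⟩)),
          ?_, ?_⟩
        · exact mem_Tset.mpr (Or.inr (Or.inr rfl))
        · rw [fH_fam1 (by omega) (by omega) (by omega),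
            fV_not_sp (by rw [sp_iff']; omega), max_eq_right (by omega)]
          omega
    · have ha4 : 4 ≤ a := by omega
      by_cases hb' : b = a - 1
      · subst hb'
        obtain ⟨m, rfl⟩ : ∃ m, a = m + 1 := ⟨a - 1, by omega⟩
        have : m + 1 - 1 = m := by omega
        rw [this, pt_fam2a (by omega)]
        refine ⟨Or.inr (Or.inr (Or.inr ⟨m, by omega, by omega, rfl⟩)), ?_, ?_⟩
        · exact mem_Tset.mpr (Or.inl rfl)
        · rw [fH_fam2 (by omega), fV_not_sp (by rw [sp_iff']; omega),
            max_eq_left (by omega)]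
          omega
      · rw [pt_fam1a (m := a) (j := b) (by omega) (by omega) (by omega)]
        refine ⟨Or.inr (Or.inr (Or.inl ⟨a, b, by omega, by omega, by omega, by omega, rfl⟩)),
          ?_, ?_⟩
        · exact mem_Tset.mpr (Or.inl rfl)
        · rw [fH_fam1 (by omega) (by omega) (by omega),
            fV_not_sp (by rw [sp_iff']; omega), max_eq_left (by omega)]
          omega

lemma Hset_triangle {n : ℕ} (hn : 3 ≤ n) {h : Set (ℕ × ℕ)} (hh : h ∈ Hset n) :
    IsTriangle n h := by
  rcases hh with rfl | rfl | ⟨m, j, hm, hmn, hj, hjm, rfl⟩ | ⟨m, hm, hmn, rfl⟩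
  · exact ⟨3, 2, 1, by omega, by omega, by omega, by omega, by omega, by omega, by omega,
      by omega, by omega, rfl⟩
  · exact ⟨1, 2, 3, by omega, by omega, by omega, by omega, by omega, by omega, by omega,
      by omega, by omega, rfl⟩
  · exact ⟨m, j, j+1, by omega, by omega, by omega, by omega, by omega, by omega, by omega,
      by omega, by omega, rfl⟩
  · exact ⟨m+1, m, 1, by omega, by omega, by omega, by omega, by omega, by omega, by omega,
      by omega, by omega, rfl⟩

/-- For every `n ≥ 3` there is an acyclic hypergraph with vertex set `[n]^(2)`, all of
whose hyperedges are triangles `T(a,b,c)`, having exactly two connected components: one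
whose pair-vertices are exactly the three vertices of `T(3,2,1)`, and one containing all
other vertices. -/
theorem exists_triangle_hypergraph (n : ℕ) (hn : 3 ≤ n) :
    ∃ H : Set (Set (ℕ × ℕ)),
      (∀ h ∈ H, IsTriangle n h) ∧
      (incGraph (PairsSet n) H).IsAcyclic ∧
      TwoComponents321 (PairsSet n) H := by
  classical
  refine ⟨Hset n, fun h hh => Hset_triangle hn hh, ?_, ?_⟩
  · -- acyclicity
    apply acyclic_of_level (incGraph (PairsSet n) (Hset n)) (Sum.elim (fun v => fV (v : ℕ × ℕ)) (fun h => fH (h : Set (ℕ × ℕ))))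
    · intro x y hadj
      rcases hadj with ⟨v, h, rfl, rfl, hm⟩ | ⟨v, h, rfl, rfl, hm⟩
      · simpa using fne h.2 hm
      · simpa using (fne h.2 hm).symm
    · intro x y z hxy hxz hfy hfz
      rcases hxy with ⟨v, h, rfl, rfl, hm⟩ | ⟨v, h, rfl, rfl, hm⟩
      · rcases hxz with ⟨v', h', he, rfl, hm'⟩ | ⟨v', h', rfl, he, hm'⟩
        · rw [Sum.inl.injEq] at he; subst he
          simp only [Sum.elim_inl, Sum.elim_inr] at hfy hfz
          congr 1
          exact Subtype.ext ((parent_eq h.2 hm hfy).trans (parent_eq h'.2 hm' hfz).symm)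
        · exact absurd he (by simp)
      · rcases hxz with ⟨v', h', he, _, _⟩ | ⟨v', h', rfl, he, hm'⟩
        · exact absurd he (by simp)
        · rw [Sum.inr.injEq] at he; subst he
          simp only [Sum.elim_inl, Sum.elim_inr] at hfy hfz
          have hne : (h : Set (ℕ × ℕ)) ≠ Tset 3 2 1 := by
            intro habs
            rw [habs, fH_321] at hfy; omega
          obtain ⟨w, hwmem, hwV, hwlt, huniq⟩ := oldArc hn h.2 hne
          congr 1
          exact Subtype.ext ((huniq _ hm hfy).trans (huniq _ hm' hfz).symm)
  · -- two components
    have h321 : Tset 3 2 1 ∈ Hset n := Or.inl rfl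
    have h12 : ((1, 2) : ℕ × ℕ) ∈ PairsSet n := ⟨by simp, by simp, by omega, by simp, by omega⟩
    set G := incGraph (PairsSet n) (Hset n) with hG
    set r1 : ↥(Hset n) := ⟨Tset 3 2 1, h321⟩ with hr1
    set r2 : ↥(PairsSet n) := ⟨(1, 2), h12⟩ with hr2
    set S : Set (↥(PairsSet n) ⊕ ↥(Hset n)) :=
      {x | (∃ v : ↥(PairsSet n), x = Sum.inl v ∧ Sp (v : ℕ × ℕ)) ∨ x = Sum.inr r1} with hS
    have hSclosed : ∀ x ∈ S, ∀ y, G.Adj x y → y ∈ S := by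
      intro x hx y hadj
      rcases hx with ⟨v, rfl, hsp⟩ | rfl
      · rcases hadj with ⟨v', h', he, rfl, hm⟩ | ⟨v', h', rfl, he, hm⟩
        · rw [Sum.inl.injEq] at he; subst he
          exact Or.inr (by
            congr 1
            exact Subtype.ext (only_321 h'.2 hm hsp))
        · exact absurd he (by simp)
      · rcases hadj with ⟨v', h', he, _, _⟩ | ⟨v', h', rfl, he, hm⟩
        · exact absurd he (by simp)
        · rw [Sum.inr.injEq] at he; subst he
          exact Or.inl ⟨v', rfl, sp_iff.mpr hm⟩
    have hmemS : ∀ y, G.connectedComponentMk y = G.connectedComponentMk (Sum.inr r1) → y ∈ S := by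
      intro y hy
      exact closed_comp G S hSclosed (Or.inr rfl)
        (SimpleGraph.ConnectedComponent.exact hy.symm)
    refine ⟨G.connectedComponentMk (Sum.inr r1), G.connectedComponentMk (Sum.inl r2), ?_, ?_, ?_⟩
    · intro heq
      rcases hmemS _ heq.symm with ⟨v, he, hsp⟩ | he
      · rw [Sum.inl.injEq] at he
        rw [← he] at hsp
        rw [hr2] at hsp
        rw [sp_iff'] at hsp
        omega
      · exact absurd he (by simp)
    · apply comp_cover G (Sum.elim (fun v => fV (v : ℕ × ℕ)) (fun h => fH (h : Set (ℕ × ℕ))))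
      intro x hx1 hx2
      rcases x with v | h
      · by_cases hsp : Sp (v : ℕ × ℕ)
        · refine ⟨Sum.inr r1, Or.inl ⟨v, r1, rfl, rfl, sp_iff.mp hsp⟩, ?_⟩
          simp only [Sum.elim_inl, Sum.elim_inr, hr1, fH_321, fV_sp hsp]
          omega
        · have hne12 : (v : ℕ × ℕ) ≠ (1, 2) := by
            intro habs
            exact hx2 (by rw [hr2]; congr 1; exact Subtype.ext habs)
          obtain ⟨hH, hmem, hlt⟩ := parent_exists v.2 hsp hne12
          exact ⟨Sum.inr ⟨parentTri (v : ℕ × ℕ), hH⟩,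
            Or.inl ⟨v, ⟨parentTri (v : ℕ × ℕ), hH⟩, rfl, rfl, hmem⟩, by simpa using hlt⟩
      · have hne : (h : Set (ℕ × ℕ)) ≠ Tset 3 2 1 := by
          intro habs
          exact hx1 (by rw [hr1]; congr 1; exact Subtype.ext habs)
        obtain ⟨w, hwmem, hwV, hwlt, _⟩ := oldArc hn h.2 hne
        exact ⟨Sum.inl ⟨w, hwV⟩, Or.inr ⟨⟨w, hwV⟩, h, rfl, rfl, hwmem⟩, by simpa using hwlt⟩
    · intro v
      constructor
      · intro hv
        rcases hmemS _ hv with ⟨v', he, hsp⟩ | he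
        · rw [Sum.inl.injEq] at he
          rw [he]
          exact sp_iff.mp hsp
        · exact absurd he (by simp)
      · intro hmem
        exact SimpleGraph.ConnectedComponent.sound
          (SimpleGraph.Adj.reachable (Or.inl ⟨v, r1, rfl, rfl, hmem⟩))
end

section
/- The hypergraph on vertex set [n]^(2) whose hyperedges are all triangles T(a,b,c) with max{a,b} < c and b ≡ a+1 (mod c-1) is acyclic and has exactly two components: one consisting of the three vertices of T(3,2,1), and one containing all other vertices (for n ≥ 3). -/
/-! ### Auxiliary machinery -/

open SimpleGraph

/-- Abstract acyclicity criterion: if adjacent nodes have different rank and every node has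
at most one lower-ranked neighbour, the graph is acyclic. -/
lemma acyclic_of_rank {α : Type*} (G : SimpleGraph α) (ρ : α → ℕ)
    (hne : ∀ x y, G.Adj x y → ρ x ≠ ρ y)
    (huniq : ∀ x y z, G.Adj x y → G.Adj x z → ρ y < ρ x → ρ z < ρ x → y = z) :
    G.IsAcyclic := by
  classical
  intro v c hc
  have hsupne : c.support ≠ [] := c.support_ne_nil
  obtain ⟨u, hu⟩ : ∃ u, u ∈ c.support.argmax ρ := by
    cases h : c.support.argmax ρ with
    | none => exact absurd (List.argmax_eq_none.mp h) hsupne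
    | some u => exact ⟨u, by simp [h]⟩
  have humem : u ∈ c.support := List.argmax_mem hu
  have hmax : ∀ a ∈ c.support, ρ a ≤ ρ u := fun a ha => List.le_of_mem_argmax ha hu
  have hc' : (c.rotate u humem).IsCycle := hc.rotate humem
  have hsup : ∀ a ∈ (c.rotate u humem).support, ρ a ≤ ρ u := by
    intro a ha
    rcases (Walk.mem_support_iff _).mp ha with rfl | ha'
    · exact le_rfl
    · exact hmax a (List.mem_of_mem_tail ((c.support_rotate u humem).mem_iff.mp ha'))
  obtain ⟨b, hadj, q, hq⟩ := Walk.not_nil_iff.mp hc'.not_nil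
  rw [hq] at hc' hsup
  have hub : u ≠ b := G.ne_of_adj hadj
  obtain ⟨d, hud, q2, hq2⟩ := Walk.exists_eq_cons_of_ne hub q.reverse
  have hbsup : b ∈ (Walk.cons hadj q).support := by simp [Walk.support_cons]
  have hdq : d ∈ q.support := by
    have : d ∈ q.reverse.support := by rw [hq2]; simp [Walk.support_cons]
    rwa [Walk.support_reverse, List.mem_reverse] at this
  have hdsup : d ∈ (Walk.cons hadj q).support := by simp [Walk.support_cons, hdq]
  have hbd : b ≠ d := by
    intro hbd
    have hnodup : (Walk.cons hadj q).edges.Nodup := hc'.isCircuit.isTrail.edges_nodup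
    rw [Walk.edges_cons, List.nodup_cons] at hnodup
    apply hnodup.1
    subst hbd
    have : s(u, b) ∈ q.reverse.edges := by rw [hq2]; simp
    rwa [Walk.edges_reverse, List.mem_reverse] at this
  have hρb : ρ b < ρ u := lt_of_le_of_ne (hsup b hbsup) (fun e => hne u b hadj e.symm)
  have hρd : ρ d < ρ u := lt_of_le_of_ne (hsup d hdsup) (fun e => hne u d hud e.symm)
  exact hbd (huniq u b d hadj hud hρb hρd)

/-- The concrete hyperedge set. -/
def HSet (n : ℕ) : Set (Set (ℕ × ℕ)) :=
  {h | ∃ a b c : ℕ, a ≠ b ∧ b ≠ c ∧ a ≠ c ∧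
    1 ≤ a ∧ a ≤ n ∧ 1 ≤ b ∧ b ≤ n ∧ 1 ≤ c ∧ c ≤ n ∧
    max a b < c ∧ b % (c - 1) = (a + 1) % (c - 1) ∧ h = Tset a b c}

lemma mem_PairsSet_iff {n x y : ℕ} :
    (x, y) ∈ PairsSet n ↔ x ≠ y ∧ 1 ≤ x ∧ x ≤ n ∧ 1 ≤ y ∧ y ≤ n := Iff.rfl

lemma mem_Tset_iff {v : ℕ × ℕ} {a b c : ℕ} :
    v ∈ Tset a b c ↔ v = (a, b) ∨ v = (b, c) ∨ v = (c, a) := by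
  simp [Tset]

/-- Characterization of the hyperedges. -/
lemma mem_HSet_iff {n : ℕ} {h : Set (ℕ × ℕ)} :
    h ∈ HSet n ↔
      (∃ a c : ℕ, 1 ≤ a ∧ a + 2 ≤ c ∧ c ≤ n ∧ h = Tset a (a + 1) c) ∨
      (∃ c : ℕ, 3 ≤ c ∧ c ≤ n ∧ h = Tset (c - 1) 1 c) := by
  constructor
  · rintro ⟨a, b, c, hab, hbc, hac, ha1, han, hb1, hbn, hc1, hcn, hmax, hmod, rfl⟩
    have hac' : a < c := lt_of_le_of_lt (le_max_left a b) hmax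
    have hbc' : b < c := lt_of_le_of_lt (le_max_right a b) hmax
    have hc3 : 3 ≤ c := by omega
    by_cases hca : a + 2 ≤ c
    · -- then b = a + 1
      left
      have hb : b = a + 1 := by
        have hmb : b % (c - 1) = if b = c - 1 then 0 else b := by
          split
          · next hh => rw [hh, Nat.mod_self]
          · next hh => exact Nat.mod_eq_of_lt (by omega)
        have hma : (a + 1) % (c - 1) = if a + 1 = c - 1 then 0 else a + 1 := by
          split
          · next hh => rw [hh, Nat.mod_self]
          · next hh => exact Nat.mod_eq_of_lt (by omega)
        rw [hmb, hma] at hmod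
        split at hmod <;> split at hmod <;> omega
      exact ⟨a, c, by omega, hca, hcn, by rw [hb]⟩
    · -- a = c - 1, then b = 1
      right
      have ha' : a = c - 1 := by omega
      have hmc : (a + 1) % (c - 1) = 1 := by
        have : a + 1 = (c - 1) + 1 := by omega
        rw [this, Nat.add_mod_left, Nat.mod_eq_of_lt (by omega)]
      have hb : b = 1 := by
        rw [hmc] at hmod
        have hmb : b % (c - 1) = if b = c - 1 then 0 else b := by
          split
          · next hh => rw [hh, Nat.mod_self]
          · next hh => exact Nat.mod_eq_of_lt (by omega)
        rw [hmb] at hmod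
        split at hmod <;> omega
      exact ⟨c, hc3, hcn, by rw [ha', hb]⟩
  · rintro (⟨a, c, ha1, hac, hcn, rfl⟩ | ⟨c, hc3, hcn, rfl⟩)
    · exact ⟨a, a + 1, c, by omega, by omega, by omega, ha1, by omega, by omega,
        by omega, by omega, hcn, max_lt (by omega) (by omega), rfl, rfl⟩
    · refine ⟨c - 1, 1, c, by omega, by omega, by omega, by omega, by omega, le_rfl,
        by omega, by omega, hcn, max_lt (by omega) (by omega), ?_, rfl⟩
      have h1 : (1 : ℕ) % (c - 1) = 1 := Nat.mod_eq_of_lt (by omega)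
      have h2 : (c - 1 + 1) % (c - 1) = 1 := by
        rw [Nat.add_mod_left, Nat.mod_eq_of_lt (by omega)]
      rw [h1, h2]

/-- The coordinate-sum function. -/
def csum (p : ℕ × ℕ) : ℕ := p.1 + p.2

lemma image_csum_Tset (a b c : ℕ) : csum '' Tset a b c = {a + b, b + c, c + a} := by
  simp [Tset, Set.image_insert_eq, csum]

lemma sInf_triple {x y z : ℕ} (h1 : x ≤ y) (h2 : x ≤ z) : sInf ({x, y, z} : Set ℕ) = x := by
  have hmem : sInf ({x, y, z} : Set ℕ) ∈ ({x, y, z} : Set ℕ) :=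
    Nat.sInf_mem ⟨x, by simp⟩
  have hle : sInf ({x, y, z} : Set ℕ) ≤ x := Nat.sInf_le (by simp)
  simp only [Set.mem_insert_iff, Set.mem_singleton_iff] at hmem
  omega

lemma sInf_csum_fam1 {a c : ℕ} (hac : a + 2 ≤ c) :
    sInf (csum '' Tset a (a + 1) c) = 2 * a + 1 := by
  rw [image_csum_Tset]
  have : a + (a + 1) = 2 * a + 1 := by omega
  rw [this, sInf_triple (by omega) (by omega)]

lemma sInf_csum_fam2 {c : ℕ} (hc : 3 ≤ c) :
    sInf (csum '' Tset (c - 1) 1 c) = c := by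
  rw [image_csum_Tset]
  have : c - 1 + 1 = c := by omega
  rw [this, sInf_triple (by omega) (by omega)]

/-- The unique hyperedge of which a vertex is a child. -/
def parentEdge (x y : ℕ) : Set (ℕ × ℕ) :=
  if x < y then
    (if x = 1 then Tset (y - 1) 1 y else Tset (x - 1) x y)
  else
    (if y + 1 = x then Tset (x - 1) 1 x else Tset y (y + 1) x)

/-- Any hyperedge containing `v`, of rank lower than `v`, equals `parentEdge v.1 v.2`. -/
lemma eq_parentEdge {n : ℕ} {h : Set (ℕ × ℕ)} (hh : h ∈ HSet n) {v : ℕ × ℕ}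
    (hv : v ∈ h) (hlt : sInf (csum '' h) < v.1 + v.2) : h = parentEdge v.1 v.2 := by
  rcases mem_HSet_iff.mp hh with ⟨a, c, ha1, hac, hcn, rfl⟩ | ⟨c, hc3, hcn, rfl⟩
  · rw [sInf_csum_fam1 hac] at hlt
    rcases mem_Tset_iff.mp hv with rfl | rfl | rfl
    · exfalso; simp only [csum] at hlt; omega
    · show Tset a (a + 1) c = parentEdge (a + 1) c
      rw [parentEdge, if_pos (show a + 1 < c by omega),
        if_neg (show ¬(a + 1 = 1) by omega)]
      norm_num
    · show Tset a (a + 1) c = parentEdge c a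
      rw [parentEdge, if_neg (show ¬(c < a) by omega),
        if_neg (show ¬(a + 1 = c) by omega)]
  · rw [sInf_csum_fam2 hc3] at hlt
    rcases mem_Tset_iff.mp hv with rfl | rfl | rfl
    · exfalso; simp only [csum] at hlt; omega
    · show Tset (c - 1) 1 c = parentEdge 1 c
      rw [parentEdge, if_pos (show 1 < c by omega), if_pos rfl]
    · show Tset (c - 1) 1 c = parentEdge c (c - 1)
      rw [parentEdge, if_neg (show ¬(c < c - 1) by omega),
        if_pos (show c - 1 + 1 = c by omega)]

/-- A hyperedge has a unique vertex of minimal coordinate sum. -/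
lemma eq_of_csum_le_sInf {n : ℕ} {h : Set (ℕ × ℕ)} (hh : h ∈ HSet n) {v w : ℕ × ℕ}
    (hv : v ∈ h) (hw : w ∈ h) (h1 : v.1 + v.2 ≤ sInf (csum '' h))
    (h2 : w.1 + w.2 ≤ sInf (csum '' h)) : v = w := by
  rcases mem_HSet_iff.mp hh with ⟨a, c, ha1, hac, hcn, rfl⟩ | ⟨c, hc3, hcn, rfl⟩
  · rw [sInf_csum_fam1 hac] at h1 h2
    rcases mem_Tset_iff.mp hv with rfl | rfl | rfl <;>
      rcases mem_Tset_iff.mp hw with rfl | rfl | rfl <;> simp_all <;> omega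
  · rw [sInf_csum_fam2 hc3] at h1 h2
    rcases mem_Tset_iff.mp hv with rfl | rfl | rfl <;>
      rcases mem_Tset_iff.mp hw with rfl | rfl | rfl <;> simp_all <;> omega

/-- Every vertex other than `(1,2)` and `(2,1)` has a valid parent hyperedge. -/
lemma vertex_parent {n : ℕ} {v : ℕ × ℕ} (hv : v ∈ PairsSet n)
    (h1 : v ≠ (1, 2)) (h2 : v ≠ (2, 1)) :
    parentEdge v.1 v.2 ∈ HSet n ∧ v ∈ parentEdge v.1 v.2 ∧
      sInf (csum '' parentEdge v.1 v.2) < v.1 + v.2 := by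
  obtain ⟨x, y⟩ := v
  obtain ⟨hxy, hx1, hxn, hy1, hyn⟩ := hv
  have h1' : ¬(x = 1 ∧ y = 2) := fun hc => h1 (by rw [hc.1, hc.2])
  have h2' : ¬(x = 2 ∧ y = 1) := fun hc => h2 (by rw [hc.1, hc.2])
  clear h1 h2
  show parentEdge x y ∈ HSet n ∧ (x, y) ∈ parentEdge x y ∧
    sInf (csum '' parentEdge x y) < x + y
  rcases lt_or_gt_of_ne hxy with hlt | hgt
  · by_cases hx : x = 1
    · -- (1, y) with y ≥ 3
      subst hx
      have hy3 : 3 ≤ y := by omega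
      have hpe : parentEdge 1 y = Tset (y - 1) 1 y := by
        rw [parentEdge, if_pos hlt, if_pos rfl]
      refine ⟨?_, ?_, ?_⟩ <;> rw [hpe]
      · exact mem_HSet_iff.mpr (Or.inr ⟨y, hy3, hyn, rfl⟩)
      · exact mem_Tset_iff.mpr (Or.inr (Or.inl rfl))
      · rw [sInf_csum_fam2 hy3]; omega
    · -- (x, y) with 2 ≤ x < y
      have hx2 : 2 ≤ x := by omega
      have hpe : parentEdge x y = Tset (x - 1) x y := by
        rw [parentEdge, if_pos hlt, if_neg hx]
      have hx' : x - 1 + 1 = x := by omega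
      refine ⟨?_, ?_, ?_⟩ <;> rw [hpe]
      · exact mem_HSet_iff.mpr (Or.inl ⟨x - 1, y, by omega, by omega, hyn, by rw [hx']⟩)
      · exact mem_Tset_iff.mpr (Or.inr (Or.inl rfl))
      · have := sInf_csum_fam1 (a := x - 1) (c := y) (by omega)
        rw [hx'] at this; rw [this]; omega
  · by_cases hy : y + 1 = x
    · -- (x, x-1) with x ≥ 3
      have hx3 : 3 ≤ x := by
        rcases Nat.lt_or_ge x 3 with hx | hx
        · interval_cases x <;> omega
        · exact hx
      have hpe : parentEdge x y = Tset (x - 1) 1 x := by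
        rw [parentEdge, if_neg (show ¬ x < y by omega), if_pos hy]
      refine ⟨?_, ?_, ?_⟩ <;> rw [hpe]
      · exact mem_HSet_iff.mpr (Or.inr ⟨x, hx3, hxn, rfl⟩)
      · refine mem_Tset_iff.mpr (Or.inr (Or.inr ?_))
        rw [Prod.mk.injEq]
        omega
      · rw [sInf_csum_fam2 hx3]; omega
    · -- (x, y) with y + 2 ≤ x
      have hy2 : y + 2 ≤ x := by omega
      have hpe : parentEdge x y = Tset y (y + 1) x := by
        rw [parentEdge, if_neg (show ¬ x < y by omega), if_neg hy]
      refine ⟨?_, ?_, ?_⟩ <;> rw [hpe]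
      · exact mem_HSet_iff.mpr (Or.inl ⟨y, x, hy1, hy2, hxn, rfl⟩)
      · exact mem_Tset_iff.mpr (Or.inr (Or.inr rfl))
      · rw [sInf_csum_fam1 hy2]; omega

/-- Every hyperedge has a vertex realizing the minimal coordinate sum, lying in `PairsSet n`. -/
lemma edge_parent {n : ℕ} {h : Set (ℕ × ℕ)} (hh : h ∈ HSet n) :
    ∃ v : ℕ × ℕ, v ∈ h ∧ v ∈ PairsSet n ∧ v.1 + v.2 = sInf (csum '' h) := by
  rcases mem_HSet_iff.mp hh with ⟨a, c, ha1, hac, hcn, rfl⟩ | ⟨c, hc3, hcn, rfl⟩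
  · refine ⟨(a, a + 1), mem_Tset_iff.mpr (Or.inl rfl),
      mem_PairsSet_iff.mpr (by omega), ?_⟩
    rw [sInf_csum_fam1 hac]; show a + (a + 1) = 2 * a + 1; omega
  · refine ⟨(c - 1, 1), mem_Tset_iff.mpr (Or.inl rfl),
      mem_PairsSet_iff.mpr (by omega), ?_⟩
    rw [sInf_csum_fam2 hc3]; show c - 1 + 1 = c; omega

/-- The only hyperedge meeting `Tset 2 1 3` is `Tset 2 1 3` itself. -/
lemma edge_of_mem_T213 {n : ℕ} {h : Set (ℕ × ℕ)} (hh : h ∈ HSet n) {v : ℕ × ℕ}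
    (hv : v ∈ h) (hvS : v ∈ Tset 2 1 3) : h = Tset 2 1 3 := by
  rcases mem_HSet_iff.mp hh with ⟨a, c, ha1, hac, hcn, rfl⟩ | ⟨c, hc3, hcn, rfl⟩
  · exfalso
    rcases mem_Tset_iff.mp hv with rfl | rfl | rfl <;>
      rcases mem_Tset_iff.mp hvS with hx | hx | hx <;>
        simp only [Prod.mk.injEq] at hx <;> omega
  · have hc : c = 3 := by
      rcases mem_Tset_iff.mp hv with rfl | rfl | rfl <;>
        rcases mem_Tset_iff.mp hvS with hx | hx | hx <;>
          simp only [Prod.mk.injEq] at hx <;> omega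
    rw [hc]

lemma T321_eq_T213 : Tset 3 2 1 = Tset 2 1 3 := by
  ext p
  simp only [Tset, Set.mem_insert_iff, Set.mem_singleton_iff]
  tauto

/-- The explicit hypergraph whose hyperedges are all triangles `T(a,b,c)` with
`max{a,b} < c` and `b ≡ a + 1 (mod c-1)` is acyclic with exactly two components:
one consisting of the three vertices of `T(3,2,1)`, and one containing all other
vertices of `[n]^(2)` (for `n ≥ 3`). -/
theorem explicit_hypergraph (n : ℕ) (hn : 3 ≤ n) :
    (incGraph (PairsSet n)
      {h | ∃ a b c : ℕ, a ≠ b ∧ b ≠ c ∧ a ≠ c ∧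
        1 ≤ a ∧ a ≤ n ∧ 1 ≤ b ∧ b ≤ n ∧ 1 ≤ c ∧ c ≤ n ∧
        max a b < c ∧ b % (c - 1) = (a + 1) % (c - 1) ∧ h = Tset a b c}).IsAcyclic ∧
    TwoComponents321 (PairsSet n)
      {h | ∃ a b c : ℕ, a ≠ b ∧ b ≠ c ∧ a ≠ c ∧
        1 ≤ a ∧ a ≤ n ∧ 1 ≤ b ∧ b ≤ n ∧ 1 ≤ c ∧ c ≤ n ∧
        max a b < c ∧ b % (c - 1) = (a + 1) % (c - 1) ∧ h = Tset a b c} := by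
  show (incGraph (PairsSet n) (HSet n)).IsAcyclic ∧ TwoComponents321 (PairsSet n) (HSet n)
  set V := PairsSet n
  set H := HSet n
  set G := incGraph V H with hG
  -- the rank function
  set ρ : (↥V ⊕ ↥H) → ℕ :=
    Sum.elim (fun v => 2 * ((v : ℕ × ℕ).1 + (v : ℕ × ℕ).2))
      (fun h => 2 * sInf (csum '' (h : Set (ℕ × ℕ))) + 1) with hρ
  -- adjacency characterization
  have hadj_iff : ∀ (v : ↥V) (h : ↥H), G.Adj (Sum.inl v) (Sum.inr h) ↔
      (v : ℕ × ℕ) ∈ (h : Set (ℕ × ℕ)) := by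
    intro v h
    constructor
    · rintro (⟨v', h', hv, hh, hm⟩ | ⟨v', h', hv, hh, hm⟩)
      · rw [Sum.inl.injEq] at hv; rw [Sum.inr.injEq] at hh; subst hv; subst hh; exact hm
      · simp at hv
    · intro hm; exact Or.inl ⟨v, h, rfl, rfl, hm⟩
  have hadj_cases : ∀ {x y : ↥V ⊕ ↥H}, G.Adj x y →
      (∃ (v : ↥V) (h : ↥H), x = Sum.inl v ∧ y = Sum.inr h ∧ (v : ℕ × ℕ) ∈ (h : Set (ℕ × ℕ))) ∨
      (∃ (v : ↥V) (h : ↥H), y = Sum.inl v ∧ x = Sum.inr h ∧ (v : ℕ × ℕ) ∈ (h : Set (ℕ × ℕ))) :=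
    fun hxy => hxy
  -- rank properties
  have hne : ∀ x y, G.Adj x y → ρ x ≠ ρ y := by
    intro x y hxy
    rcases hadj_cases hxy with ⟨v, h, rfl, rfl, -⟩ | ⟨v, h, rfl, rfl, -⟩ <;>
      simp only [hρ, Sum.elim_inl, Sum.elim_inr] <;> omega
  have huniq : ∀ x y z, G.Adj x y → G.Adj x z → ρ y < ρ x → ρ z < ρ x → y = z := by
    intro x y z hxy hxz hy hz
    rcases hadj_cases hxy with ⟨v, h, rfl, rfl, hm⟩ | ⟨v, h, rfl, rfl, hm⟩
    · -- x = inl v, y = inr h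
      rcases hadj_cases hxz with ⟨v', h', hv', rfl, hm'⟩ | ⟨v', h', hv', hbad, hm'⟩
      · rw [Sum.inl.injEq] at hv'
        rw [← hv'] at hm'
        simp only [hρ, Sum.elim_inl, Sum.elim_inr] at hy hz
        have e1 : (h : Set (ℕ × ℕ)) = parentEdge (v : ℕ × ℕ).1 (v : ℕ × ℕ).2 :=
          eq_parentEdge h.2 hm (by omega)
        have e2 : (h' : Set (ℕ × ℕ)) = parentEdge (v : ℕ × ℕ).1 (v : ℕ × ℕ).2 :=
          eq_parentEdge h'.2 hm' (by omega)
        rw [Sum.inr.injEq]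
        exact Subtype.ext (e1.trans e2.symm)
      · simp at hbad
    · -- x = inr h, y = inl v
      rcases hadj_cases hxz with ⟨v', h', hbad, hzz, hm'⟩ | ⟨v', h', rfl, hh', hm'⟩
      · simp at hbad
      · rw [Sum.inr.injEq] at hh'
        rw [← hh'] at hm'
        simp only [hρ, Sum.elim_inl, Sum.elim_inr] at hy hz
        rw [Sum.inl.injEq]
        exact Subtype.ext (eq_of_csum_le_sInf h.2 hm hm' (by omega) (by omega))
  have hacyclic : G.IsAcyclic := acyclic_of_rank G ρ hne huniq
  -- the small component predicate
  set inS : (↥V ⊕ ↥H) → Prop :=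
    Sum.elim (fun v => (v : ℕ × ℕ) ∈ Tset 2 1 3) (fun h => (h : Set (ℕ × ℕ)) = Tset 2 1 3)
    with hinS
  have hclosed : ∀ {x y}, G.Adj x y → inS x → inS y := by
    intro x y hxy hx
    rcases hadj_cases hxy with ⟨v, h, rfl, rfl, hm⟩ | ⟨v, h, rfl, rfl, hm⟩
    · simp only [hinS, Sum.elim_inl, Sum.elim_inr] at hx ⊢
      exact edge_of_mem_T213 h.2 hm hx
    · simp only [hinS, Sum.elim_inl, Sum.elim_inr] at hx ⊢
      rw [hx] at hm; exact hm
  -- membership proofs for the distinguished nodes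
  have h12V : ((1, 2) : ℕ × ℕ) ∈ V := mem_PairsSet_iff.mpr (by omega)
  have h21V : ((2, 1) : ℕ × ℕ) ∈ V := mem_PairsSet_iff.mpr (by omega)
  have hT213H : Tset 2 1 3 ∈ H := by
    refine mem_HSet_iff.mpr (Or.inr ⟨3, le_rfl, hn, ?_⟩)
    norm_num
  set r₁ : ↥V ⊕ ↥H := Sum.inl ⟨(1, 2), h12V⟩ with hr₁
  set r₂ : ↥V ⊕ ↥H := Sum.inl ⟨(2, 1), h21V⟩ with hr₂
  set eT : ↥V ⊕ ↥H := Sum.inr ⟨Tset 2 1 3, hT213H⟩ with heT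
  have h21T : ((2, 1) : ℕ × ℕ) ∈ Tset 2 1 3 := mem_Tset_iff.mpr (Or.inl rfl)
  have heT_r₂ : G.Adj eT r₂ := (G.adj_symm (hadj_iff ⟨(2, 1), h21V⟩ ⟨_, hT213H⟩ |>.mpr h21T))
  -- every node of S reaches r₂
  have hreachS : ∀ x, inS x → G.Reachable x r₂ := by
    intro x hx
    rcases x with v | h
    · simp only [hinS, Sum.elim_inl] at hx
      by_cases hv : (v : ℕ × ℕ) = (2, 1)
      · have : v = ⟨(2, 1), h21V⟩ := Subtype.ext hv
        rw [hr₂, this]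
      · have hadj : G.Adj (Sum.inl v) eT := (hadj_iff v ⟨_, hT213H⟩).mpr hx
        exact hadj.reachable.trans heT_r₂.reachable
    · simp only [hinS, Sum.elim_inr] at hx
      have : (⟨(h : Set (ℕ × ℕ)), h.2⟩ : ↥H) = ⟨Tset 2 1 3, hT213H⟩ := Subtype.ext hx
      have hh : Sum.inr (β := ↥H) h = eT := by rw [heT]; exact congrArg Sum.inr this
      rw [hh]
      exact heT_r₂.reachable
  -- every node outside S reaches r₁
  have hreach : ∀ (N : ℕ) (x), ρ x ≤ N → ¬ inS x → G.Reachable x r₁ := by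
    intro N
    induction N with
    | zero =>
      intro x hx _
      exfalso
      rcases x with v | h
      · have := v.2.2.1
        simp only [hρ, Sum.elim_inl] at hx
        omega
      · simp only [hρ, Sum.elim_inr] at hx
        omega
    | succ N ih =>
      intro x hx hS
      rcases x with v | h
      · by_cases hv12 : (v : ℕ × ℕ) = (1, 2)
        · have : v = ⟨(1, 2), h12V⟩ := Subtype.ext hv12
          rw [hr₁, this]
        · have hv21 : (v : ℕ × ℕ) ≠ (2, 1) := by
            intro hc
            apply hS
            simp only [hinS, Sum.elim_inl]
            rw [hc]; exact h21T
          obtain ⟨hpH, hpm, hplt⟩ := vertex_parent v.2 hv12 hv21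
          have hadj : G.Adj (Sum.inl v) (Sum.inr ⟨parentEdge (v : ℕ × ℕ).1 (v : ℕ × ℕ).2, hpH⟩) :=
            (hadj_iff v ⟨_, hpH⟩).mpr hpm
          have hrk : ρ (Sum.inr (⟨parentEdge (v : ℕ × ℕ).1 (v : ℕ × ℕ).2, hpH⟩ : ↥H)) < ρ (Sum.inl v) := by
            simp only [hρ, Sum.elim_inl, Sum.elim_inr]
            omega
          have hnS : ¬ inS (Sum.inr (⟨parentEdge (v : ℕ × ℕ).1 (v : ℕ × ℕ).2, hpH⟩ : ↥H)) := by
            simp only [hinS, Sum.elim_inr]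
            intro hc
            apply hS
            simp only [hinS, Sum.elim_inl]
            rw [← hc]; exact hpm
          have hxle : ρ (Sum.inl v) ≤ N + 1 := hx
          exact hadj.reachable.trans (ih _ (by omega) hnS)
      · obtain ⟨w, hwm, hwV, hws⟩ := edge_parent h.2
        have hadj : G.Adj (Sum.inr h) (Sum.inl ⟨w, hwV⟩) :=
          G.adj_symm ((hadj_iff ⟨w, hwV⟩ h).mpr hwm)
        have hrk : ρ (Sum.inl (⟨w, hwV⟩ : ↥V)) < ρ (Sum.inr h) := by
          simp only [hρ, Sum.elim_inl, Sum.elim_inr]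
          omega
        have hnS : ¬ inS (Sum.inl (⟨w, hwV⟩ : ↥V)) := by
          simp only [hinS, Sum.elim_inl]
          intro hc
          apply hS
          simp only [hinS, Sum.elim_inr]
          exact edge_of_mem_T213 h.2 hwm hc
        have hxle : ρ (Sum.inr h) ≤ N + 1 := hx
        exact hadj.reachable.trans (ih _ (by omega) hnS)
  -- S is closed under reachability
  have hwalkS : ∀ {x y : ↥V ⊕ ↥H}, G.Reachable x y → inS x → inS y := by
    intro x y hxy hx
    obtain ⟨p⟩ := hxy
    induction p with
    | nil => exact hx
    | cons hadj p ih => exact ih (hclosed hadj hx)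
  refine ⟨hacyclic, G.connectedComponentMk r₂, G.connectedComponentMk r₁, ?_, ?_, ?_⟩
  · -- the two components are distinct
    intro hc
    have hreach21 : G.Reachable r₂ r₁ := ConnectedComponent.exact hc
    have : inS r₁ := hwalkS hreach21 (by simp only [hr₂, hinS, Sum.elim_inl]; exact h21T)
    simp only [hr₁, hinS, Sum.elim_inl] at this
    rcases mem_Tset_iff.mp this with hx | hx | hx <;> simp at hx
  · -- every node is in one of the two components
    intro x
    by_cases hx : inS x
    · exact Or.inl (ConnectedComponent.sound (hreachS x hx))
    · exact Or.inr (ConnectedComponent.sound (hreach (ρ x) x le_rfl hx))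
  · -- characterization of the small component
    intro v
    constructor
    · intro hc
      have hreachv : G.Reachable r₂ (Sum.inl v) := (ConnectedComponent.exact hc).symm
      have : inS (Sum.inl v) :=
        hwalkS hreachv (by simp only [hr₂, hinS, Sum.elim_inl]; exact h21T)
      simp only [hinS, Sum.elim_inl] at this
      rwa [T321_eq_T213]
    · intro hv
      rw [T321_eq_T213] at hv
      exact ConnectedComponent.sound (hreachS (Sum.inl v) (by simpa [hinS] using hv))
end

section
/- (Rankin's theorem) Let G be a finite group generated by two elements a, b, and let Γ be the directed Cayley graph of G with generators a and b. If the order of a b^{-1} is odd and |G|/ord(a) is even, then Γ has no directed Hamiltonian cycle. -/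
open Equiv Equiv.Perm Subgroup

-- sign of right multiplication by a, when card G / orderOf a is even
theorem sign_mulRight_even (G : Type*) [Group G] [Fintype G] [DecidableEq G] (a : G)
    (heven : Even (Fintype.card G / orderOf a)) :
    Equiv.Perm.sign (Equiv.mulRight a) = 1 := by
  classical
  set H := Subgroup.zpowers a with hH
  letI : Fintype (G ⧸ H) := Fintype.ofFinite _
  -- the intertwining equivalence
  have hmem : ∀ g : G, ((Quotient.out (g : G ⧸ H))⁻¹ * g) ∈ H := by
    intro g
    rw [← QuotientGroup.eq]
    exact QuotientGroup.out_eq' _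
  let e : G ≃ (G ⧸ H) × H :=
  { toFun := fun g => ((g : G ⧸ H), ⟨(Quotient.out (g : G ⧸ H))⁻¹ * g, hmem g⟩)
    invFun := fun p => Quotient.out p.1 * (p.2 : G)
    left_inv := fun g => by simp
    right_inv := fun p => by
      obtain ⟨q, h⟩ := p
      have h1 : ((Quotient.out q * (h : G) : G) : G ⧸ H) = q := by
        rw [QuotientGroup.mk_mul_of_mem _ h.2, QuotientGroup.out_eq']
      ext
      · exact h1
      · simp [h1] }
  have key : e.permCongr (Equiv.mulRight a)
      = Equiv.prodCongrRight (fun _ => Equiv.mulRight (⟨a, Subgroup.mem_zpowers a⟩ : H)) := by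
    ext ⟨q, h⟩
    · show ((Quotient.out q * (h : G) * a : G) : G ⧸ H) = q
      rw [mul_assoc, QuotientGroup.mk_mul_of_mem _ (H.mul_mem h.2 (Subgroup.mem_zpowers a)),
        QuotientGroup.out_eq']
    · show ((Quotient.out (((Quotient.out q * (h : G) * a : G)) : G ⧸ H))⁻¹
        * (Quotient.out q * (h : G) * a) : G) = ((h : G) * a : G)
      have h1 : ((Quotient.out q * (h : G) * a : G) : G ⧸ H) = q := by
        rw [mul_assoc, QuotientGroup.mk_mul_of_mem _ (H.mul_mem h.2 (Subgroup.mem_zpowers a)),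
          QuotientGroup.out_eq']
      rw [h1]
      group
  have hsign : Equiv.Perm.sign (Equiv.mulRight a)
      = (Equiv.Perm.sign (Equiv.mulRight (⟨a, Subgroup.mem_zpowers a⟩ : H))) ^ Fintype.card (G ⧸ H) := by
    rw [← Equiv.Perm.sign_permCongr e, key, Equiv.Perm.sign_prodCongrRight, Finset.prod_const,
      Finset.card_univ]
  rw [hsign]
  have hcard : Fintype.card (G ⧸ H) = Fintype.card G / orderOf a := by
    have h2 : Nat.card G = Nat.card (G ⧸ H) * Nat.card H := Subgroup.card_eq_card_quotient_mul_card_subgroup H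
    have h3 : Nat.card H = orderOf a := Nat.card_zpowers a
    have h4 : 0 < orderOf a := orderOf_pos a
    simp only [Nat.card_eq_fintype_card] at h2 h3
    rw [h2, h3, Nat.mul_div_cancel _ h4]
  rw [hcard]
  obtain ⟨t, ht⟩ := heven
  rw [ht, ← two_mul, pow_mul, Int.units_sq, one_pow]

/-- **Rankin's theorem.** Let `G` be a finite group generated by `a` and `b`.  If the order of
`a b⁻¹` is odd and `|G| / ord(a)` is even, then the directed Cayley graph of `G` with
generators `a, b` has no directed Hamiltonian cycle.  A directed Hamiltonian cycle is
encoded by a permutation `σ` of the vertex set `G` (the successor map) such that every step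
follows a directed edge (`σ g ∈ {g * a, g * b}`) and iterating `σ` from any vertex reaches
every vertex (so `σ` is a single cycle through all of `G`). -/
theorem rankin (G : Type*) [Group G] [Fintype G] (a b : G)
    (hgen : Subgroup.closure ({a, b} : Set G) = ⊤)
    (hodd : Odd (orderOf (a * b⁻¹)))
    (heven : Even (Fintype.card G / orderOf a)) :
    ¬ ∃ σ : Equiv.Perm G,
        (∀ g : G, σ g = g * a ∨ σ g = g * b) ∧ ∀ g h : G, ∃ m : ℕ, (σ ^ m) g = h := by
  classical
  rintro ⟨σ, hstep, htrans⟩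
  -- rule out the trivial group
  by_cases hcard1 : Fintype.card G = 1
  · have ha1 : a = 1 := Fintype.card_le_one_iff.mp (le_of_eq hcard1) a 1
    rw [hcard1, ha1, orderOf_one] at heven
    simpa using heven
  have hnt : Nontrivial G := Fintype.one_lt_card_iff_nontrivial.mp
    (lt_of_le_of_ne (Nat.one_le_iff_ne_zero.mpr Fintype.card_ne_zero) (Ne.symm hcard1))
  set d := a * b⁻¹ with hd
  set π : Equiv.Perm G := (Equiv.mulRight a)⁻¹ * σ with hπ
  have hσeq : σ = Equiv.mulRight a * π := by rw [hπ]; group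
  have hπval : ∀ g : G, π g = g ∨ π g = g * d⁻¹ := by
    intro g
    rcases hstep g with h | h
    · left
      simp [hπ, h, Equiv.Perm.mul_apply, mul_assoc]
    · right
      simp [hπ, h, hd, Equiv.Perm.mul_apply, mul_inv_rev, mul_assoc]
  have hπmoved : ∀ g : G, π g ≠ g → π g = g * d⁻¹ := fun g hg => (hπval g).resolve_left hg
  have hBstep : ∀ g : G, π g ≠ g → π (g * d⁻¹) ≠ g * d⁻¹ := by
    intro g hg h2
    have h1 : π g = g * d⁻¹ := hπmoved g hg
    have h3 : g = g * d⁻¹ := π.injective (h1.trans h2.symm)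
    exact hg (by rw [h1, ← h3])
  have hpow : ∀ (j : ℕ) (g : G), π g ≠ g → (π ^ j) g = g * (d⁻¹) ^ j := by
    intro j
    induction j with
    | zero => intro g _; simp
    | succ j ih =>
        intro g hg
        rw [pow_succ, Equiv.Perm.mul_apply, hπmoved g hg, ih _ (hBstep g hg), mul_assoc,
          ← pow_succ']
  have hfix : ∀ (j : ℕ) (g : G), π g = g → (π ^ j) g = g := by
    intro j
    induction j with
    | zero => intro g _; simp
    | succ j ih =>
        intro g hg
        rw [pow_succ, Equiv.Perm.mul_apply, hg]
        exact ih g hg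
  have hπk : π ^ orderOf d = 1 := by
    ext g
    rcases em (π g = g) with h | h
    · simp [hfix _ g h]
    · rw [Equiv.Perm.one_apply, hpow _ g h, inv_pow, pow_orderOf_eq_one, inv_one, mul_one]
  have hsignπ : Equiv.Perm.sign π = 1 := by
    have h1 : (Equiv.Perm.sign π) ^ orderOf d = 1 := by
      rw [← map_pow, hπk, map_one]
    rcases Int.units_eq_one_or (Equiv.Perm.sign π) with h | h
    · exact h
    · rw [h, Odd.neg_one_pow hodd] at h1
      exact absurd h1 (by decide)
  have hmoved : ∀ g : G, σ g ≠ g := by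
    intro g h
    obtain ⟨g2, hg2⟩ := exists_ne g
    have hfixσ : ∀ m : ℕ, (σ ^ m) g = g := by
      intro m
      induction m with
      | zero => simp
      | succ m ih =>
          rw [pow_succ, Equiv.Perm.mul_apply, h]
          exact ih
    obtain ⟨m, hm⟩ := htrans g g2
    rw [hfixσ m] at hm
    exact hg2 hm.symm
  have hcycle : σ.IsCycle := by
    refine ⟨1, hmoved 1, fun y _ => ?_⟩
    obtain ⟨m, hm⟩ := htrans 1 y
    exact ⟨(m : ℤ), by simpa [zpow_natCast] using hm⟩
  have hsupp : σ.support = Finset.univ := by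
    ext g
    simp [Equiv.Perm.mem_support, hmoved g]
  have hsignσ : Equiv.Perm.sign σ = -(-1) ^ Fintype.card G := by
    rw [hcycle.sign, hsupp, Finset.card_univ]
  have hneven : Even (Fintype.card G) := by
    have h1 : Fintype.card G / orderOf a * orderOf a = Fintype.card G :=
      Nat.div_mul_cancel orderOf_dvd_card
    rw [← h1]
    exact heven.mul_right _
  have hfinal : Equiv.Perm.sign σ = -1 := by
    rw [hsignσ, hneven.neg_one_pow]
  rw [hσeq, map_mul, hsignπ, sign_mulRight_even G a heven, one_mul] at hfinal
  exact absurd hfinal (by decide)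
end

section
/- Let n ≥ 3 be odd, and consider any directed Hamiltonian cycle of the Cayley graph of A_n with generators τ_3, τ_5, …, τ_n. For every i ∈ {1,…,n} there exists a permutation π ∈ A_n with π(n) = i whose outgoing edge in the cycle is labelled τ_n. -/
open Fin.NatCast in
lemma finRotate_pow_apply (m k : ℕ) (j : Fin (m + 1)) :
    ((finRotate (m + 1)) ^ k) j = j + (k : Fin (m + 1)) := by
  induction k generalizing j with
  | zero => simp
  | succ k ih =>
    rw [pow_succ', Equiv.Perm.mul_apply, ih, finRotate_succ_apply]
    push_cast
    exact add_assoc _ _ _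

/-- For odd `n ≥ 3` and any directed Hamiltonian cycle of the Cayley graph of `A_n` with
generators `τ_3, τ_5, …, τ_n` (encoded by its successor permutation `σ`), for every
`i ∈ {1,…,n}` there is a vertex `π` with `π(n) = i` whose outgoing edge in the cycle is
labelled `τ_n`.  Position `n` is the last index `⟨n-1, _⟩ : Fin n`. -/
theorem exists_tau_n_edge (n : ℕ) (hodd : Odd n) (h3 : 3 ≤ n)
    (σ : Equiv.Perm ↥(alternatingGroup (Fin n)))
    (hstep : ∀ g : ↥(alternatingGroup (Fin n)),
      ∃ k, Odd k ∧ 3 ≤ k ∧ k ≤ n ∧ (↑(σ g) : Equiv.Perm (Fin n)) = ↑g * tau n k)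
    (hham : ∀ g h : ↥(alternatingGroup (Fin n)), ∃ m : ℕ, (σ ^ m) g = h) :
    ∀ i : Fin n, ∃ π : ↥(alternatingGroup (Fin n)),
      (↑π : Equiv.Perm (Fin n)) ⟨n - 1, by omega⟩ = i ∧
      (↑(σ π) : Equiv.Perm (Fin n)) = ↑π * tau n n := by
  intro i
  by_contra hno
  push_neg at hno
  obtain ⟨m, rfl⟩ : ∃ m, n = m + 1 := ⟨n - 1, by omega⟩
  have hm2 : 2 ≤ m := by omega
  have hmeven : Even m := by
    rcases hodd with ⟨t, ht⟩; exact ⟨t, by omega⟩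
  set last : Fin (m + 1) := ⟨m + 1 - 1, by omega⟩ with hlastdef
  have hlast : last = Fin.last m := rfl
  -- τ_n as the inverse of finRotate
  have htau : tau (m + 1) (m + 1) = (finRotate (m + 1))⁻¹ := by
    rw [tau, dif_pos (show m + 1 - 1 < m + 1 by omega)]
    congr 1
    have : (⟨m + 1 - 1, show m + 1 - 1 < m + 1 by omega⟩ : Fin (m + 1)) = Fin.last m := rfl
    rw [this, Fin.cycleRange_last]
  -- finRotate is even
  have hcA : finRotate (m + 1) ∈ alternatingGroup (Fin (m + 1)) := by
    rw [Equiv.Perm.mem_alternatingGroup, sign_finRotate]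
    exact hmeven.neg_one_pow
  have htA : tau (m + 1) (m + 1) ∈ alternatingGroup (Fin (m + 1)) := by
    rw [htau]
    exact inv_mem hcA
  -- τ_k fixes `last` for k < m+1
  have hfix : ∀ k, 3 ≤ k → k < m + 1 → tau (m + 1) k last = last := by
    intro k hk3 hk
    rw [tau, dif_pos (show k - 1 < m + 1 by omega)]
    have hgt : (⟨k - 1, show k - 1 < m + 1 by omega⟩ : Fin (m + 1)) < last := by
      simp only [Fin.lt_def, hlastdef]; omega
    have h1 : Fin.cycleRange ⟨k - 1, show k - 1 < m + 1 by omega⟩ last = last :=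
      Fin.cycleRange_of_gt hgt
    conv_lhs => rw [← h1]
    exact Equiv.symm_apply_apply _ _
  -- τ_n does not fix last
  have hm1 : m - 1 < m + 1 := by omega
  have hntau : tau (m + 1) (m + 1) last = ⟨m - 1, hm1⟩ := by
    rw [htau]
    have : finRotate (m + 1) ⟨m - 1, hm1⟩ = last := by
      rw [finRotate_succ_apply]
      apply Fin.ext
      rw [Fin.add_def]
      have e1 : ((1 : Fin (m + 1)) : ℕ) = 1 := by
        rw [Fin.val_one']; exact Nat.mod_eq_of_lt (by omega)
      rw [e1]
      show (m - 1 + 1) % (m + 1) = m + 1 - 1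
      rw [show m - 1 + 1 = m from by omega, Nat.mod_eq_of_lt (by omega)]
      omega
    conv_lhs => rw [← this]
    exact Equiv.symm_apply_apply _ _
  -- the starting vertex with value i in position last
  set c : ↥(alternatingGroup (Fin (m + 1))) := ⟨finRotate (m + 1), hcA⟩ with hcdef
  set g0 : ↥(alternatingGroup (Fin (m + 1))) := c ^ (i - last).val with hg0def
  have hg0coe : (↑g0 : Equiv.Perm (Fin (m + 1))) = (finRotate (m + 1)) ^ (i - last).val := by
    rw [hg0def, SubgroupClass.coe_pow]
  have hg0apply : ∀ j : Fin (m + 1), (↑g0 : Equiv.Perm (Fin (m + 1))) j = j + (i - last) := by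
    intro j
    rw [hg0coe, finRotate_pow_apply, Fin.cast_val_eq_self]
  have hg0 : (↑g0 : Equiv.Perm (Fin (m + 1))) last = i := by
    rw [hg0apply]; exact add_sub_cancel last i
  -- σ preserves the set {g | g last = i}
  have hclosed : ∀ g : ↥(alternatingGroup (Fin (m + 1))),
      (↑g : Equiv.Perm (Fin (m + 1))) last = i →
      (↑(σ g) : Equiv.Perm (Fin (m + 1))) last = i := by
    intro g hg
    obtain ⟨k, hk1, hk3, hkn, hk⟩ := hstep g
    rcases eq_or_lt_of_le hkn with rfl | hlt
    · exact absurd hk (hno g hg)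
    · rw [hk, Equiv.Perm.mul_apply, hfix k hk3 hlt, hg]
  have hiter : ∀ j : ℕ, (↑((σ ^ j) g0) : Equiv.Perm (Fin (m + 1))) last = i := by
    intro j
    induction j with
    | zero => simpa using hg0
    | succ j ih =>
      rw [pow_succ', Equiv.Perm.mul_apply]
      exact hclosed _ ih
  -- the vertex g0 * τ_n doesn't have value i at position last
  set h0 : ↥(alternatingGroup (Fin (m + 1))) := g0 * ⟨tau (m + 1) (m + 1), htA⟩ with hh0def
  obtain ⟨j, hj⟩ := hham g0 h0
  have h1 : (↑h0 : Equiv.Perm (Fin (m + 1))) last = i := by rw [← hj]; exact hiter j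
  have h2 : (↑h0 : Equiv.Perm (Fin (m + 1))) last = (↑g0 : Equiv.Perm (Fin (m + 1))) ⟨m - 1, hm1⟩ := by
    rw [hh0def, Subgroup.coe_mul, Equiv.Perm.mul_apply, hntau]
  have h3' : (↑g0 : Equiv.Perm (Fin (m + 1))) ⟨m - 1, hm1⟩ =
      (↑g0 : Equiv.Perm (Fin (m + 1))) last := by
    rw [h2.symm, h1, hg0]
  have := (Equiv.injective _) h3'
  have : (⟨m - 1, hm1⟩ : Fin (m + 1)) = last := this
  rw [hlastdef] at this
  have := Fin.mk.injEq .. ▸ this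
  omega
end
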